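/- If Y(a) ⊥ A | X for a = 0,1 (ignorability given X), then Y(a) ⊥ A | e(X), i.e., adjusting for the propensity score alone removes confounding: E[Y(a) | A = 1, e(X)] = E[Y(a) | e(X)] a.s. for a = 0,1. -/

import Mathlib

open MeasureTheory ProbabilityTheory

/-- On a.e. fiber of the conditional expectation kernel, a `μ`-a.e. equality still holds. -/
lemma ae_ae_eq_condExpKernel
    {Ω : Type*} {m : MeasurableSpace Ω} [mΩ : MeasurableSpace Ω] [StandardBorelSpace Ω]
    (hm : m ≤ mΩ)
    (μ : Measure Ω) [IsProbabilityMeasure μ]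
    {f g : Ω → ℝ} (hfg : f =ᵐ[μ] g) :
    ∀ᵐ ω ∂(μ.trim hm), f =ᵐ[condExpKernel μ m ω] g := by
  obtain ⟨N, hsub, hN, hNnull⟩ :=
    exists_measurable_superset_of_null (ae_iff.mp hfg)
  have hind : N.indicator (fun _ => (1 : ℝ)) =ᵐ[μ] 0 := by
    filter_upwards [measure_eq_zero_iff_ae_notMem.mp hNnull] with ω hω
    simp [Set.indicator_of_notMem hω]
  have h2 : (μ⟦N | m⟧) =ᵐ[μ] 0 := by
    refine (condExp_congr_ae hind).trans ?_
    rw [condExp_zero]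
  have hκN : ∀ᵐ ω ∂μ, condExpKernel μ m ω N = 0 := by
    filter_upwards [condExpKernel_ae_eq_condExp hm hN, h2] with ω h1 h2'
    have htr : (condExpKernel μ m ω N).toReal = 0 := by
      show (condExpKernel μ m ω).real N = 0
      rw [h1, h2']; rfl
    have hne : condExpKernel μ m ω N ≠ ⊤ := measure_ne_top _ _
    simpa [ENNReal.toReal_eq_zero_iff, hne] using htr
  have hSm : MeasurableSet[m] {ω | condExpKernel μ m ω N = 0} :=
    measurable_condExpKernel hN (measurableSet_singleton 0)
  have htrim : μ.trim hm {ω | condExpKernel μ m ω N = 0}ᶜ = 0 := by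
    rw [trim_measurableSet_eq hm hSm.compl]
    exact ae_iff.mp hκN
  have : ∀ᵐ ω ∂(μ.trim hm), condExpKernel μ m ω N = 0 := by
    rw [ae_iff]
    exact htrim
  filter_upwards [this] with ω hω
  exact measure_mono_null hsub hω


lemma aux_condIndep
    {Ω : Type*} {G M : MeasurableSpace Ω} [mΩ : MeasurableSpace Ω] [StandardBorelSpace Ω]
    (μ : Measure Ω) [IsProbabilityMeasure μ]
    (A Y ε : Ω → ℝ)
    (hA : Measurable A) (hY : Measurable Y)
    (hAbin : ∀ ω, A ω = 0 ∨ A ω = 1)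
    (hGM : G ≤ M) (hM : M ≤ mΩ) (hG : G ≤ mΩ)
    (hεG : StronglyMeasurable[G] ε)
    (hεm : Measurable ε)
    (hbdd : ∀ᵐ ω ∂μ, 0 ≤ ε ω ∧ ε ω ≤ 1)
    (hεX : ε =ᵐ[μ] μ[A | M])
    (hig : CondIndepFun M hM Y A μ) :
    CondIndepFun G hG Y A μ := by
  have hA1 : MeasurableSet (A ⁻¹' {1}) := hA (measurableSet_singleton 1)
  have hindA : (A ⁻¹' {1}).indicator (fun _ => (1 : ℝ)) = A := by
    funext ω
    rcases hAbin ω with h | h <;>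
      simp [Set.indicator_apply, Set.mem_preimage, h]
  have hεint : Integrable ε μ := by
    refine Integrable.mono' (integrable_const 1) hεm.aestronglyMeasurable ?_
    filter_upwards [hbdd] with ω hω
    rw [Real.norm_eq_abs, abs_le]
    exact ⟨by linarith [hω.1], hω.2⟩
  have hAG : μ[A | G] =ᵐ[μ] ε := by
    have h1 : μ[A | G] =ᵐ[μ] μ[μ[A | M] | G] := (condExp_condExp_of_le hGM hM).symm
    have h2 : μ[μ[A | M] | G] =ᵐ[μ] μ[ε | G] := condExp_congr_ae hεX.symm
    have h3 : μ[ε | G] = ε := condExp_of_stronglyMeasurable hG hεG hεint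
    exact h1.trans (h2.trans (by rw [h3]))
  have hA1G : (μ⟦A ⁻¹' {1} | G⟧) =ᵐ[μ] ε := by
    show μ[(A ⁻¹' {1}).indicator (fun _ => (1:ℝ)) | G] =ᵐ[μ] _
    rw [hindA]; exact hAG
  have hA1M : (μ⟦A ⁻¹' {1} | M⟧) =ᵐ[μ] ε := by
    show μ[(A ⁻¹' {1}).indicator (fun _ => (1:ℝ)) | M] =ᵐ[μ] _
    rw [hindA]; exact hεX.symm
  -- the key identity for sets of the form Y ⁻¹' s intersected with {A = 1}
  have hstar : ∀ s : Set ℝ, MeasurableSet s →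
      (μ⟦Y ⁻¹' s ∩ A ⁻¹' {1} | G⟧) =ᵐ[μ]
        fun ω => (μ⟦Y ⁻¹' s | G⟧) ω * ε ω := by
    intro s hs
    have hSm : MeasurableSet (Y ⁻¹' s) := hY hs
    have h1 : (μ⟦Y ⁻¹' s ∩ A ⁻¹' {1} | M⟧) =ᵐ[μ]
        fun ω => (μ⟦Y ⁻¹' s | M⟧) ω * (μ⟦A ⁻¹' {1} | M⟧) ω :=
      (condIndepFun_iff_condExp_inter_preimage_eq_mul hY hA).mp hig s {1} hs
        (measurableSet_singleton 1)
    have h2 : (μ⟦Y ⁻¹' s ∩ A ⁻¹' {1} | M⟧) =ᵐ[μ] ε * (μ⟦Y ⁻¹' s | M⟧) := by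
      filter_upwards [h1, hA1M] with ω hω1 hω2
      rw [hω1, hω2, Pi.mul_apply]
      ring
    have hic : Integrable (μ⟦Y ⁻¹' s | M⟧) μ := integrable_condExp
    have hintmul : Integrable (ε * (μ⟦Y ⁻¹' s | M⟧)) μ := by
      refine Integrable.mono' hic.norm
        (hεm.aestronglyMeasurable.mul
          ((stronglyMeasurable_condExp.mono hM).aestronglyMeasurable)) ?_
      filter_upwards [hbdd] with ω hω
      rw [Pi.mul_apply, Real.norm_eq_abs, abs_mul]
      calc |ε ω| * |(μ⟦Y ⁻¹' s | M⟧) ω| ≤ 1 * |(μ⟦Y ⁻¹' s | M⟧) ω| := by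
            apply mul_le_mul_of_nonneg_right _ (abs_nonneg _)
            rw [abs_le]; exact ⟨by linarith [hω.1], hω.2⟩
        _ = ‖(μ⟦Y ⁻¹' s | M⟧) ω‖ := by rw [one_mul]; rfl
    calc (μ⟦Y ⁻¹' s ∩ A ⁻¹' {1} | G⟧)
        =ᵐ[μ] μ[μ⟦Y ⁻¹' s ∩ A ⁻¹' {1} | M⟧ | G] := (condExp_condExp_of_le hGM hM).symm
      _ =ᵐ[μ] μ[ε * (μ⟦Y ⁻¹' s | M⟧) | G] := condExp_congr_ae h2
      _ =ᵐ[μ] ε * μ[μ⟦Y ⁻¹' s | M⟧ | G] :=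
          condExp_mul_of_stronglyMeasurable_left hεG hintmul integrable_condExp
      _ =ᵐ[μ] fun ω => (μ⟦Y ⁻¹' s | G⟧) ω * ε ω := by
          filter_upwards [condExp_condExp_of_le hGM hM
            (f := (Y ⁻¹' s).indicator fun _ => (1:ℝ))] with ω hω
          rw [Pi.mul_apply, hω]
          ring
  rw [condIndepFun_iff_condExp_inter_preimage_eq_mul hY hA]
  intro s t hs ht
  have hSm : MeasurableSet (Y ⁻¹' s) := hY hs
  by_cases h1t : (1:ℝ) ∈ t <;> by_cases h0t : (0:ℝ) ∈ t
  · -- A ⁻¹' t = univ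
    have hAt : A ⁻¹' t = Set.univ := by
      ext ω
      simp only [Set.mem_preimage, Set.mem_univ, iff_true]
      rcases hAbin ω with h | h <;> rw [h] <;> assumption
    rw [hAt, Set.inter_univ]
    have huniv : (μ⟦(Set.univ : Set Ω) | G⟧) = fun _ => (1:ℝ) := by
      show μ[(Set.univ : Set Ω).indicator (fun _ => (1:ℝ)) | G] = _
      rw [Set.indicator_univ, condExp_const hG (1:ℝ)]
    rw [huniv]
    filter_upwards with ω
    rw [mul_one]
  · -- 1 ∈ t, 0 ∉ t : A ⁻¹' t = A ⁻¹' {1}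
    have hAt : A ⁻¹' t = A ⁻¹' {1} := by
      ext ω
      simp only [Set.mem_preimage, Set.mem_singleton_iff]
      constructor
      · intro hh
        rcases hAbin ω with h | h
        · exact absurd (h ▸ hh) h0t
        · exact h
      · intro hh
        rw [hh]; exact h1t
    rw [hAt]
    filter_upwards [hstar s hs, hA1G] with ω hω1 hω2
    rw [hω1, hω2]
  · -- 0 ∈ t, 1 ∉ t : A ⁻¹' t = (A ⁻¹' {1})ᶜ
    have hAt : A ⁻¹' t = (A ⁻¹' {1})ᶜ := by
      ext ω
      simp only [Set.mem_preimage, Set.mem_compl_iff, Set.mem_singleton_iff]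
      constructor
      · intro hh hc
        exact h1t (hc ▸ hh)
      · intro hh
        rcases hAbin ω with h | h
        · rw [h]; exact h0t
        · exact absurd h hh
    rw [hAt]
    have hindS : (Y ⁻¹' s ∩ (A ⁻¹' {1})ᶜ).indicator (fun _ => (1:ℝ))
        = (Y ⁻¹' s).indicator (fun _ => (1:ℝ))
          - (Y ⁻¹' s ∩ A ⁻¹' {1}).indicator (fun _ => (1:ℝ)) := by
      funext ω
      by_cases hωS : ω ∈ Y ⁻¹' s <;> by_cases hωA : ω ∈ A ⁻¹' {1} <;>
        simp [Set.indicator_apply, hωS, hωA]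
    have hindAc : ((A ⁻¹' {1})ᶜ).indicator (fun _ => (1:ℝ))
        = (fun _ => (1:ℝ)) - (A ⁻¹' {1}).indicator (fun _ => (1:ℝ)) := by
      funext ω
      by_cases hωA : ω ∈ A ⁻¹' {1} <;> simp [Set.indicator_apply, hωA]
    have hL : (μ⟦Y ⁻¹' s ∩ (A ⁻¹' {1})ᶜ | G⟧) =ᵐ[μ]
        μ⟦Y ⁻¹' s | G⟧ - μ⟦Y ⁻¹' s ∩ A ⁻¹' {1} | G⟧ := by
      show μ[(Y ⁻¹' s ∩ (A ⁻¹' {1})ᶜ).indicator (fun _ => (1:ℝ)) | G] =ᵐ[μ] _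
      rw [hindS]
      exact condExp_sub (m := G) ((integrable_const (1:ℝ)).indicator hSm)
        ((integrable_const (1:ℝ)).indicator (hSm.inter hA1))
    have hR : (μ⟦(A ⁻¹' {1})ᶜ | G⟧) =ᵐ[μ] fun ω => 1 - ε ω := by
      show μ[((A ⁻¹' {1})ᶜ).indicator (fun _ => (1:ℝ)) | G] =ᵐ[μ] _
      rw [hindAc]
      refine (condExp_sub (m := G) (μ := μ) (integrable_const (1:ℝ))
        ((integrable_const (1:ℝ)).indicator hA1)).trans ?_
      have hc : μ[(fun _ => (1:ℝ)) | G] = fun _ => (1:ℝ) := condExp_const hG (1:ℝ)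
      filter_upwards [hA1G] with ω hω2
      rw [Pi.sub_apply, hc, hω2]
    filter_upwards [hL, hstar s hs, hR] with ω hω1 hω2 hω3
    rw [hω1, Pi.sub_apply, hω2, hω3]
    ring
  · -- A ⁻¹' t = ∅
    have hAt : A ⁻¹' t = (∅ : Set Ω) := by
      ext ω
      simp only [Set.mem_preimage, Set.mem_empty_iff_false, iff_false]
      rcases hAbin ω with h | h <;> rw [h] <;> assumption
    rw [hAt, Set.inter_empty]
    have hempty : (μ⟦(∅ : Set Ω) | G⟧) =ᵐ[μ] fun _ => (0:ℝ) := by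
      show μ[(∅ : Set Ω).indicator (fun _ => (1:ℝ)) | G] =ᵐ[μ] _
      have h0 : ((∅ : Set Ω).indicator (fun _ => (1:ℝ))) = (0 : Ω → ℝ) := by
        funext ω
        simp
      rw [h0, condExp_zero]
      filter_upwards with ω
      simp
    filter_upwards [hempty] with ω hω
    rw [hω, mul_zero]

lemma transfer_condIndep
    {Ω : Type*} {m : MeasurableSpace Ω} [mΩ : MeasurableSpace Ω] [StandardBorelSpace Ω]
    (μ : Measure Ω) [IsProbabilityMeasure μ]
    {Y Y' A : Ω → ℝ} (hm : m ≤ mΩ) (hYY' : Y =ᵐ[μ] Y')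
    (h : CondIndepFun m hm Y A μ) : CondIndepFun m hm Y' A μ :=
  Kernel.IndepFun.congr' h (ae_ae_eq_condExpKernel hm μ hYY')
    (Filter.Eventually.of_forall fun _ => Filter.EventuallyEq.rfl)

/-- If `Y(a) ⊥ A | X` for `a = 0,1` (ignorability given `X`), then `Y(a) ⊥ A | e(X)`:
adjusting for the propensity score alone removes confounding. -/
theorem ignorability_given_propensity_score
    {Ω 𝒳 : Type*} [mΩ : MeasurableSpace Ω] [StandardBorelSpace Ω] [MeasurableSpace 𝒳]
    (μ : Measure Ω) [IsProbabilityMeasure μ]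
    (X : Ω → 𝒳) (A : Ω → ℝ) (Y1 Y0 : Ω → ℝ)
    (hX : Measurable X) (hA : Measurable A)
    (hY1 : Integrable Y1 μ) (hY0 : Integrable Y0 μ)
    (hAbin : ∀ ω, A ω = 0 ∨ A ω = 1)
    (e : 𝒳 → ℝ) (he : Measurable e)
    (heX : (fun ω => e (X ω)) =ᵐ[μ] μ[A | MeasurableSpace.comap X inferInstance])
    (hpos : ∀ᵐ ω ∂μ, 0 < e (X ω) ∧ e (X ω) < 1)
    (hig1 : CondIndepFun (MeasurableSpace.comap X inferInstance) hX.comap_le Y1 A μ)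
    (hig0 : CondIndepFun (MeasurableSpace.comap X inferInstance) hX.comap_le Y0 A μ) :
    CondIndepFun (MeasurableSpace.comap (fun ω => e (X ω)) inferInstance)
        ((he.comp hX).comap_le) Y1 A μ ∧
    CondIndepFun (MeasurableSpace.comap (fun ω => e (X ω)) inferInstance)
        ((he.comp hX).comap_le) Y0 A μ := by
  have hM : MeasurableSpace.comap X inferInstance ≤ mΩ := hX.comap_le
  have hG : MeasurableSpace.comap (fun ω => e (X ω)) inferInstance ≤ mΩ :=
    (he.comp hX).comap_le
  have hGM : MeasurableSpace.comap (fun ω => e (X ω)) inferInstance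
      ≤ MeasurableSpace.comap X inferInstance := by
    rintro _ ⟨s, hs, rfl⟩
    exact ⟨e ⁻¹' s, he hs, rfl⟩
  have hesm : StronglyMeasurable[MeasurableSpace.comap (fun ω => e (X ω)) inferInstance]
      (fun ω => e (X ω)) :=
    (Measurable.stronglyMeasurable (measurable_iff_comap_le.mpr le_rfl))
  have hbdd : ∀ᵐ ω ∂μ, 0 ≤ e (X ω) ∧ e (X ω) ≤ 1 := by
    filter_upwards [hpos] with ω hω
    exact ⟨le_of_lt hω.1, le_of_lt hω.2⟩
  have key : ∀ Y : Ω → ℝ, Integrable Y μ →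
      CondIndepFun (MeasurableSpace.comap X inferInstance) hX.comap_le Y A μ →
      CondIndepFun (MeasurableSpace.comap (fun ω => e (X ω)) inferInstance)
        ((he.comp hX).comap_le) Y A μ := by
    intro Y hYint hig
    have hae : AEMeasurable Y μ := hYint.aemeasurable
    have h1 : CondIndepFun (MeasurableSpace.comap X inferInstance) hX.comap_le
        hae.mk A μ := transfer_condIndep μ hM hae.ae_eq_mk hig
    have h2 : CondIndepFun (MeasurableSpace.comap (fun ω => e (X ω)) inferInstance)
        ((he.comp hX).comap_le) hae.mk A μ :=
      aux_condIndep μ A hae.mk (fun ω => e (X ω)) hA hae.measurable_mk hAbin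
        hGM hM hG hesm (he.comp hX) hbdd heX h1
    exact transfer_condIndep μ hG hae.ae_eq_mk.symm h2
  exact ⟨key Y1 hY1 hig1, key Y0 hY0 hig0⟩
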